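/- Define a bijection φ̄ from {I₂, σ_x, σ_z, σ_y} to GF(4) = {0, 1, ω, ω²} by φ̄(I₂)=0, φ̄(σ_x)=1, φ̄(σ_z)=ω, φ̄(σ_y)=ω², extended coordinatewise to n-fold tensor products, and define the symplectic pairing u∗v = Σ_i (v_i u_i² + v_i² u_i) ∈ GF(2) via the trace map tr(x)=x+x². Then two Pauli error operators E₁, E₂ (Kronecker products of Pauli matrices and identities) commute if φ_n(E₁)∗φ_n(E₂)=0 and anticommute if φ_n(E₁)∗φ_n(E₂)≠0. -/
import Mathlib


open Matrix

noncomputable def σx : Matrix (Fin 2) (Fin 2) ℂ := !![0, 1; 1, 0]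
noncomputable def σz : Matrix (Fin 2) (Fin 2) ℂ := !![1, 0; 0, -1]
noncomputable def σy : Matrix (Fin 2) (Fin 2) ℂ := !![0, -Complex.I; Complex.I, 0]

noncomputable def tensorProd (n : ℕ) (τ : Fin n → Matrix (Fin 2) (Fin 2) ℂ) :
    Matrix (Fin n → Fin 2) (Fin n → Fin 2) ℂ :=
  Matrix.of fun x y => ∏ i, τ i (x i) (y i)

/-- GF(4), the field with four elements. -/
abbrev GF4 := GaloisField 2 2

open scoped Classical in
/-- The inverse of the bijection `φ̄`: it sends `0 ↦ I₂`, `1 ↦ σx`, `ω ↦ σz`, `ω² ↦ σy`. -/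
noncomputable def pauliOf (ω : GF4) (a : GF4) : Matrix (Fin 2) (Fin 2) ℂ :=
  if a = 0 then 1 else if a = 1 then σx else if a = ω then σz else σy

/-- The trace-symplectic pairing `u ∗ v = Σ_i (v_i u_i² + v_i² u_i) = Σ_i tr(v_i ū_i)`,
taking values in GF(2) ⊆ GF(4). -/
noncomputable def sympPair {n : ℕ} (u v : Fin n → GF4) : GF4 :=
  ∑ i, (v i * (u i) ^ 2 + (v i) ^ 2 * u i)

lemma gf4_pow4 (a : GF4) : a ^ 4 = a := by
  haveI : Fintype GF4 := Fintype.ofFinite _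
  have hc : Fintype.card GF4 = 4 := by
    have := GaloisField.card 2 2 (by norm_num)
    simpa [Nat.card_eq_fintype_card] using this
  have h := FiniteField.pow_card a
  rwa [hc] at h
lemma gf4_two : (2:GF4) = 0 := by exact_mod_cast CharP.cast_eq_zero GF4 2
lemma gf4_cases (ω : GF4) (hω : ω^2 = ω+1) (a : GF4) : a = 0 ∨ a = 1 ∨ a = ω ∨ a = ω + 1 := by
  have h2 := gf4_two
  have h4 := gf4_pow4 a
  have hfac : a * (a+1) * (a^2+a+1) = 0 := by linear_combination h4 + (a^3+a^2+a)*h2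
  rcases mul_eq_zero.mp hfac with h | h
  · rcases mul_eq_zero.mp h with h | h
    · exact Or.inl h
    · exact Or.inr (Or.inl (by linear_combination h - h2))
  · have hsq : (a+ω)*(a+ω+1) = 0 := by linear_combination h + hω + (a*ω+ω)*h2
    rcases mul_eq_zero.mp hsq with h' | h'
    · exact Or.inr (Or.inr (Or.inl (by linear_combination h' - ω*h2)))
    · exact Or.inr (Or.inr (Or.inr (by linear_combination h' - (ω+1)*h2)))
lemma t_mem (a b : GF4) : b*a^2 + b^2*a = 0 ∨ b*a^2 + b^2*a = 1 := by
  have h2 := gf4_two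
  have hpow : (b*a^2 + b^2*a)^2 = (b*a^2)^2 + (b^2*a)^2 := by
    linear_combination a^3*b^3*h2
  have key : (b*a^2 + b^2*a)^2 = (b*a^2 + b^2*a) := by
    linear_combination hpow + b^2*(gf4_pow4 a) + a^2*(gf4_pow4 b)
  have hz : (b*a^2 + b^2*a) * ((b*a^2 + b^2*a) - 1) = 0 := by linear_combination key
  rcases mul_eq_zero.mp hz with h | h
  · exact Or.inl h
  · exact Or.inr (by linear_combination h)

lemma zx_anti : σz * σx = -(σx * σz) := by
  ext i j
  fin_cases i <;> fin_cases j <;>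
    simp [σx, σz, Matrix.mul_apply, Fin.sum_univ_two]
lemma yx_anti : σy * σx = -(σx * σy) := by
  ext i j
  fin_cases i <;> fin_cases j <;>
    simp [σx, σy, Matrix.mul_apply, Fin.sum_univ_two]
lemma yz_anti : σy * σz = -(σz * σy) := by
  ext i j
  fin_cases i <;> fin_cases j <;>
    simp [σz, σy, Matrix.mul_apply, Fin.sum_univ_two]

lemma tensor_mul (n : ℕ) (τ₁ τ₂ : Fin n → Matrix (Fin 2) (Fin 2) ℂ) :
    tensorProd n τ₁ * tensorProd n τ₂ = tensorProd n (fun i => τ₁ i * τ₂ i) := by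
  ext x y
  simp only [tensorProd, Matrix.mul_apply, Matrix.of_apply]
  rw [Finset.prod_univ_sum]
  simp [Finset.prod_mul_distrib]

lemma tensor_smul (n : ℕ) (c : Fin n → ℂ) (τ : Fin n → Matrix (Fin 2) (Fin 2) ℂ) :
    tensorProd n (fun i => c i • τ i) = (∏ i, c i) • tensorProd n τ := by
  ext x y
  simp [tensorProd, Finset.prod_mul_distrib]

open scoped Classical in
lemma pauli_swap (ω : GF4) (hω : ω^2 = ω+1) (a b : GF4) :
    pauliOf ω b * pauliOf ω a =
      (if b*a^2 + b^2*a = 0 then (1:ℂ) else -1) • (pauliOf ω a * pauliOf ω b) := by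
  classical
  have h2 := gf4_two
  have hω0 : ω ≠ 0 := by intro h; rw [h] at hω; simp at hω
  have hω1 : ω ≠ 1 := by
    intro h; rw [h] at hω
    exact one_ne_zero (α := GF4) (by linear_combination -hω)
  have hy0 : ω + 1 ≠ 0 := fun h => hω1 (by linear_combination h - h2)
  have hy1 : ω + 1 ≠ 1 := fun h => hω0 (by linear_combination h)
  have hyω : ω + 1 ≠ ω := by simp
  have e0 : pauliOf ω 0 = 1 := by simp [pauliOf]
  have e1 : pauliOf ω 1 = σx := by simp [pauliOf]
  have eω : pauliOf ω ω = σz := by simp [pauliOf, hω0, hω1]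
  have ey : pauliOf ω (ω+1) = σy := by simp [pauliOf, hy0, hy1, hyω]
  rcases gf4_cases ω hω a with rfl | rfl | ha | ha <;>
    rcases gf4_cases ω hω b with rfl | rfl | hb | hb
  -- a = 0
  · have hc : (0:GF4)*0^2 + 0^2*0 = 0 := by ring
    rw [hc, if_pos rfl, one_smul]
  · have hc : (1:GF4)*0^2 + 1^2*0 = 0 := by ring
    rw [hc, if_pos rfl, one_smul, e0, one_mul, mul_one]
  · rw [hb]
    have hc : ω*(0:GF4)^2 + ω^2*0 = 0 := by ring
    rw [hc, if_pos rfl, one_smul, e0, one_mul, mul_one]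
  · rw [hb]
    have hc : (ω+1)*(0:GF4)^2 + (ω+1)^2*0 = 0 := by ring
    rw [hc, if_pos rfl, one_smul, e0, one_mul, mul_one]
  -- a = 1
  · have hc : (0:GF4)*1^2 + 0^2*1 = 0 := by ring
    rw [hc, if_pos rfl, one_smul, e0, one_mul, mul_one]
  · have hc : (1:GF4)*1^2 + 1^2*1 = 0 := by linear_combination h2
    rw [hc, if_pos rfl, one_smul]
  · rw [hb]
    have hc : ω*(1:GF4)^2 + ω^2*1 = 1 := by linear_combination hω + ω*h2
    rw [hc, if_neg one_ne_zero, neg_one_smul, e1, eω]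
    exact zx_anti
  · rw [hb]
    have hc : (ω+1)*(1:GF4)^2 + (ω+1)^2*1 = 1 := by linear_combination hω + (2*ω+1)*h2
    rw [hc, if_neg one_ne_zero, neg_one_smul, e1, ey]
    exact yx_anti
  -- a = ω
  · rw [ha]
    have hc : (0:GF4)*ω^2 + 0^2*ω = 0 := by ring
    rw [hc, if_pos rfl, one_smul, e0, one_mul, mul_one]
  · rw [ha]
    have hc : (1:GF4)*ω^2 + 1^2*ω = 1 := by linear_combination hω + ω*h2
    rw [hc, if_neg one_ne_zero, neg_one_smul, e1, eω, zx_anti, neg_neg]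
  · rw [ha, hb]
    have hc : ω*ω^2 + ω^2*ω = 0 := by linear_combination ω^3*h2
    rw [hc, if_pos rfl, one_smul]
  · rw [ha, hb]
    have hc : (ω+1)*ω^2 + (ω+1)^2*ω = 1 := by linear_combination (2*ω+5)*hω + (4*ω+2)*h2
    rw [hc, if_neg one_ne_zero, neg_one_smul, eω, ey]
    exact yz_anti
  -- a = ω + 1
  · rw [ha]
    have hc : (0:GF4)*(ω+1)^2 + 0^2*(ω+1) = 0 := by ring
    rw [hc, if_pos rfl, one_smul, e0, one_mul, mul_one]
  · rw [ha]
    have hc : (1:GF4)*(ω+1)^2 + 1^2*(ω+1) = 1 := by linear_combination hω + (2*ω+1)*h2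
    rw [hc, if_neg one_ne_zero, neg_one_smul, e1, ey, yx_anti, neg_neg]
  · rw [ha, hb]
    have hc : ω*(ω+1)^2 + ω^2*(ω+1) = 1 := by linear_combination (2*ω+5)*hω + (4*ω+2)*h2
    rw [hc, if_neg one_ne_zero, neg_one_smul, eω, ey, yz_anti, neg_neg]
  · rw [ha, hb]
    have hc : (ω+1)*(ω+1)^2 + (ω+1)^2*(ω+1) = 0 := by linear_combination (ω+1)^3*h2
    rw [hc, if_pos rfl, one_smul]

open scoped Classical in
lemma count (n : ℕ) (t : Fin n → GF4) (ht : ∀ i, t i = 0 ∨ t i = 1) (F : Finset (Fin n)) :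
    (∑ i ∈ F, t i = 0 ∧ ∏ i ∈ F, (if t i = 0 then (1:ℂ) else -1) = 1) ∨
    (∑ i ∈ F, t i = 1 ∧ ∏ i ∈ F, (if t i = 0 then (1:ℂ) else -1) = -1) := by
  classical
  have h11 : (1:GF4) + 1 = 0 := by linear_combination gf4_two
  induction F using Finset.induction with
  | empty => left; simp
  | @insert a s ha ih =>
    rw [Finset.sum_insert ha, Finset.prod_insert ha]
    rcases ht a with h | h <;> rcases ih with ⟨hs, hp⟩ | ⟨hs, hp⟩ <;>
      simp [h, hs, hp, h11]

theorem pauli_commutation_via_GF4 (ω : GF4) (hω : ω ^ 2 = ω + 1)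
    (n : ℕ) (e₁ e₂ : Fin n → GF4) :
    (sympPair e₁ e₂ = 0 →
      tensorProd n (fun i => pauliOf ω (e₁ i)) * tensorProd n (fun i => pauliOf ω (e₂ i)) =
      tensorProd n (fun i => pauliOf ω (e₂ i)) * tensorProd n (fun i => pauliOf ω (e₁ i))) ∧
    (sympPair e₁ e₂ ≠ 0 →
      tensorProd n (fun i => pauliOf ω (e₁ i)) * tensorProd n (fun i => pauliOf ω (e₂ i)) =
      -(tensorProd n (fun i => pauliOf ω (e₂ i)) * tensorProd n (fun i => pauliOf ω (e₁ i)))) := by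
  classical
  set t : Fin n → GF4 := fun i => e₂ i * (e₁ i) ^ 2 + (e₂ i) ^ 2 * e₁ i with ht_def
  have hsymp : sympPair e₁ e₂ = ∑ i, t i := rfl
  have htm : ∀ i, t i = 0 ∨ t i = 1 := fun i => t_mem (e₁ i) (e₂ i)
  have hBA : tensorProd n (fun i => pauliOf ω (e₂ i)) * tensorProd n (fun i => pauliOf ω (e₁ i))
      = (∏ i, (if t i = 0 then (1:ℂ) else -1)) •
        (tensorProd n (fun i => pauliOf ω (e₁ i)) * tensorProd n (fun i => pauliOf ω (e₂ i))) := by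
    rw [tensor_mul, tensor_mul, ← tensor_smul]
    exact congrArg (tensorProd n) (funext fun i => pauli_swap ω hω (e₁ i) (e₂ i))
  rcases count n t htm Finset.univ with ⟨hs, hp⟩ | ⟨hs, hp⟩
  · refine ⟨fun _ => ?_, fun hne => absurd (hsymp.trans hs) hne⟩
    rw [hBA, hp, one_smul]
  · refine ⟨fun h0 => ?_, fun _ => ?_⟩
    · rw [hsymp, hs] at h0
      exact absurd h0 one_ne_zero
    · rw [hBA, hp]
      simp
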